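/- For every n ≥ 1, the flip-weighted total volume over all configurations of length 2n satisfies Σ_{w ∈ W_{2n}} F(w)·V(w) = 4^{n−1}·(2n² − n + 1). (Equivalently, this is the coefficient of zⁿ in the generating function (16z³+4z²+2z)/(1−4z)³.) -/

import Mathlib

open scoped BigOperators ENNReal

attribute [local instance] Classical.propDecidable

namespace Cooling

/-- Words over the alphabet `{1,2}`, modeled as lists of booleans:
`true` encodes the letter `1`, `false` encodes the letter `2`. -/
abbrev Word := List Bool

/-- `w` is a configuration of length `2*n`: a word of length `2*n` with as many
occurrences of the letter `1` (`true`) as of the letter `2` (`false`). -/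
def IsConfig (n : ℕ) (w : Word) : Prop :=
  w.length = 2 * n ∧ w.count true = n

/-- The (finite) set `W_{2n}` of all configurations of length `2*n`. -/
def configSet (n : ℕ) : Finset Word :=
  ((Finset.univ : Finset (Fin (2 * n) → Bool)).image List.ofFn).filter
    (fun w => w.count true = n)

/-- The number `E(w)` of mismatches of `w`: positions `i` with `w_i = w_{i+1}`. -/
def mismatches (w : Word) : ℕ :=
  (w.zip w.tail).countP (fun p => p.1 == p.2)

/-- The number `F(w)` of flips performable on `w`: positions `i` with `w_i ≠ w_{i+1}`. -/
def flipCount (w : Word) : ℕ :=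
  (w.zip w.tail).countP (fun p => p.1 != p.2)

/-- The word `w^{(i)}` obtained from `w` by exchanging the letters at positions
`i` and `i+1` (0-indexed). -/
def flip (w : Word) (i : ℕ) : Word :=
  (w.set i (w.getD (i + 1) true)).set (i + 1) (w.getD i true)

/-- A flip is permitted at position `i` if both positions `i` and `i+1` exist and the
corresponding letters are different. -/
def CanFlip (w : Word) (i : ℕ) : Prop :=
  i + 1 < w.length ∧ w.getD i true ≠ w.getD (i + 1) true

/-- The set of positions at which a flip is allowed in the cooling process:
positions of permitted flips which do not increase the number of mismatches. -/
noncomputable def allowedFlips (w : Word) : Finset ℕ :=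
  (Finset.range w.length).filter
    (fun i => CanFlip w i ∧ mismatches (flip w i) ≤ mismatches w)

/-- One step of the cooling process: if `E(w) = 0`, stay at `w`; otherwise, perform
a flip chosen uniformly at random among the flips which do not increase the number
of mismatches. -/
noncomputable def coolStep (w : Word) : PMF Word :=
  if h : mismatches w ≠ 0 ∧ (allowedFlips w).Nonempty then
    (PMF.uniformOfFinset (allowedFlips w) h.2).map (flip w)
  else
    PMF.pure w

/-- The distribution of the cooling process at time `t`, started from `w`. -/
noncomputable def coolDist (w : Word) : ℕ → PMF Word
  | 0 => PMF.pure w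
  | t + 1 => (coolDist w t).bind coolStep

/-- The expected convergence time `E[T | w₀ = w]` of the cooling process started at `w`,
where `T = min {t ≥ 0 : E(w_t) = 0}`.  Since mismatch-free configurations are absorbing,
`E[T] = ∑_{t ≥ 0} P(T > t) = ∑_{t ≥ 0} P(E(w_t) ≠ 0)`. -/
noncomputable def expConvTime (w : Word) : ℝ≥0∞ :=
  ∑' t : ℕ, (coolDist w t).toOuterMeasure {v | mismatches v ≠ 0}

/-- The factor of `w` starting at position `s` (0-indexed) of length `l`. -/
def factor (w : Word) (s l : ℕ) : Word := (w.drop s).take l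

/-- The height `|p|₁ - |p|₂` of the length-`s` prefix `p` of `w`. -/
def height (w : Word) (s : ℕ) : ℤ :=
  ((w.take s).count true : ℤ) - (w.take s).count false

/-- The occurrence `(s, l)` is a positive Dyck factor of `w`. -/
def IsPosDyckAt (w : Word) (s l : ℕ) : Prop :=
  0 < l ∧ s + l ≤ w.length ∧
  (factor w s l).count true = (factor w s l).count false ∧
  (∀ i ≤ l, ((factor w s l).take i).count false ≤ ((factor w s l).take i).count true) ∧
  0 ≤ height w s

/-- The occurrence `(s, l)` is a negative Dyck factor of `w`. -/
def IsNegDyckAt (w : Word) (s l : ℕ) : Prop :=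
  0 < l ∧ s + l ≤ w.length ∧
  (factor w s l).count true = (factor w s l).count false ∧
  (∀ i ≤ l, ((factor w s l).take i).count true ≤ ((factor w s l).take i).count false) ∧
  height w s ≤ 0

/-- The occurrence `(s, l)` is a Dyck factor of `w` (positive or negative). -/
def IsDyckAt (w : Word) (s l : ℕ) : Prop :=
  IsPosDyckAt w s l ∨ IsNegDyckAt w s l

/-- The occurrence `(s, l)` is a maximal Dyck factor of `w`: no Dyck factor of `w`
with the same height contains it (other than itself). -/
def IsMaxDyckAt (w : Word) (s l : ℕ) : Prop :=
  IsDyckAt w s l ∧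
  ∀ s' l', IsDyckAt w s' l' → height w s' = height w s → s' ≤ s → s + l ≤ s' + l' →
    s' = s ∧ l' = l

/-- The set `DF(w)` of (occurrences of) maximal Dyck factors of `w`,
encoded as pairs (starting position, length). -/
noncomputable def DF (w : Word) : Finset (ℕ × ℕ) :=
  ((Finset.range (w.length + 1)) ×ˢ (Finset.range (w.length + 1))).filter
    (fun sl => IsMaxDyckAt w sl.1 sl.2)

/-- The variant `φ_α(w) = ∑_{v ∈ DF(w)} (1 + |v|₁)^α`. -/
noncomputable def phi (α : ℝ) (w : Word) : ℝ :=
  ∑ sl ∈ DF w, (1 + ((factor w sl.1 sl.2).count true : ℝ)) ^ α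

/-- The volume `V(w) = (1/2) ∑_{k=1}^{|w|} |h_{k-1}(w) + h_k(w)|`: the area between
the broken-line representation of `w` and the horizontal axis. -/
noncomputable def volume (w : Word) : ℝ :=
  (1 / 2) * ∑ k ∈ Finset.range w.length, |((height w k + height w (k + 1) : ℤ) : ℝ)|



/-! ### Algebraic tables -/

def cI : ℕ → ℤ → ℤ
  | 0, d => if d = 0 then 1 else 0
  | l+1, d => cI l (d-1) + cI l (d+1)

def tI : ℕ → ℤ → ℤ
  | 0, _ => 0
  | l+1, d => tI l (d-1) + tI l (d+1) + |d| * cI (l+1) d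

def zI : ℕ → ℤ → ℤ
  | 0, d => if d = 0 then 1 else 0
  | l+1, d => zI l (d-1) + zI l (d+1) + (if d = 0 then cI (l+1) d else 0)

lemma cI_succ (l : ℕ) (d : ℤ) : cI (l+1) d = cI l (d-1) + cI l (d+1) := rfl
lemma tI_succ (l : ℕ) (d : ℤ) :
    tI (l+1) d = tI l (d-1) + tI l (d+1) + |d| * cI (l+1) d := rfl
lemma zI_succ (l : ℕ) (d : ℤ) :
    zI (l+1) d = zI l (d-1) + zI l (d+1) + (if d = 0 then cI (l+1) d else 0) := rfl

lemma cI_symm : ∀ (l : ℕ) (d : ℤ), cI l (-d) = cI l d := by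
  intro l
  induction l with
  | zero => intro d; simp [cI, neg_eq_zero]
  | succ l ih =>
    intro d
    rw [cI_succ, cI_succ, show -d - 1 = -(d+1) by ring, show -d + 1 = -(d-1) by ring,
      ih, ih]
    ring

lemma zI_symm : ∀ (l : ℕ) (d : ℤ), zI l (-d) = zI l d := by
  intro l
  induction l with
  | zero => intro d; simp [zI, neg_eq_zero]
  | succ l ih =>
    intro d
    rw [zI_succ, zI_succ, show -d - 1 = -(d+1) by ring, show -d + 1 = -(d-1) by ring,
      ih, ih]
    by_cases hd : d = 0
    · subst hd; norm_num; ring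
    · rw [if_neg (show ¬ -d = 0 by omega), if_neg hd]; ring

lemma tI_symm : ∀ (l : ℕ) (d : ℤ), tI l (-d) = tI l d := by
  intro l
  induction l with
  | zero => intro d; simp [tI]
  | succ l ih =>
    intro d
    rw [tI_succ, tI_succ, show -d - 1 = -(d+1) by ring, show -d + 1 = -(d-1) by ring,
      ih, ih, cI_symm, abs_neg]
    ring

lemma cI_eq_zero_of_gt : ∀ (l : ℕ) (d : ℤ), (l : ℤ) < d → cI l d = 0 := by
  intro l
  induction l with
  | zero => intro d hd; simp only [cI, ite_eq_right_iff]; omega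
  | succ l ih =>
    intro d hd
    rw [cI_succ, ih (d-1) (by push_cast at hd ⊢; omega),
      ih (d+1) (by push_cast at hd ⊢; omega)]
    ring

lemma cI_eq_zero_of_lt (l : ℕ) (d : ℤ) (h : d < -(l:ℤ)) : cI l d = 0 := by
  rw [← cI_symm]; exact cI_eq_zero_of_gt l (-d) (by omega)

lemma cI_eq_zero_of_odd : ∀ (l : ℕ) (d : ℤ), ¬ (2 ∣ ((l:ℤ) + d)) → cI l d = 0 := by
  intro l
  induction l with
  | zero => intro d hd; simp only [cI, ite_eq_right_iff]; intro h; exfalso; omega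
  | succ l ih =>
    intro d hd
    rw [cI_succ, ih (d-1) (by push_cast at hd ⊢; omega),
      ih (d+1) (by push_cast at hd ⊢; omega)]
    ring

lemma cI_choose : ∀ (l : ℕ) (k : ℕ), cI l (2*(k:ℤ) - l) = (l.choose k : ℤ) := by
  intro l
  induction l with
  | zero =>
    intro k
    cases k with
    | zero => simp [cI]
    | succ k => rw [cI_eq_zero_of_gt 0 _ (by push_cast; omega)]; simp
  | succ l ih =>
    intro k
    rw [cI_succ]
    cases k with
    | zero =>
      rw [show (2*((0:ℕ):ℤ) - (l+1:ℕ) - 1) = -(l:ℤ) - 2 by push_cast; ring,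
        cI_eq_zero_of_lt l _ (by omega),
        show (2*((0:ℕ):ℤ) - (l+1:ℕ) + 1) = 2*((0:ℕ):ℤ) - l by push_cast; ring, ih 0]
      simp
    | succ k =>
      rw [show (2*((k+1:ℕ):ℤ) - (l+1:ℕ) - 1) = 2*(k:ℤ) - l by push_cast; ring,
        show (2*((k+1:ℕ):ℤ) - (l+1:ℕ) + 1) = 2*((k+1:ℕ):ℤ) - l by push_cast; ring,
        ih k, ih (k+1), Nat.choose_succ_succ l k]
      push_cast; ring

/-! ### Tail sums -/

open Finset

noncomputable def S1 (l : ℕ) (d : ℤ) : ℤ := ∑ j ∈ Finset.Ico d ((l:ℤ)+1), cI l j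

noncomputable def T1 (l : ℕ) (d : ℤ) : ℤ := ∑ j ∈ Finset.Ico d ((l:ℤ)+1), j * cI l j

lemma sum_Ico_split (g : ℤ → ℤ) {a b c : ℤ} (hab : a ≤ b) (hbc : b ≤ c) :
    ∑ j ∈ Finset.Ico a c, g j = ∑ j ∈ Finset.Ico a b, g j + ∑ j ∈ Finset.Ico b c, g j := by
  rw [← Finset.Ico_union_Ico_eq_Ico hab hbc,
    Finset.sum_union (Finset.Ico_disjoint_Ico_consecutive a b c)]

lemma sum_Ico_stable {g : ℤ → ℤ} {l : ℕ} (hg : ∀ j, (l:ℤ) < j → g j = 0)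
    {d L : ℤ} (hL : (l:ℤ) < L) :
    ∑ j ∈ Finset.Ico d L, g j = ∑ j ∈ Finset.Ico d ((l:ℤ)+1), g j := by
  rcases le_or_gt d ((l:ℤ)+1) with hd | hd
  · rw [sum_Ico_split g hd (by omega)]
    have h0 : ∑ j ∈ Finset.Ico ((l:ℤ)+1) L, g j = 0 :=
      Finset.sum_eq_zero (fun j hj => hg j (by simp only [Finset.mem_Ico] at hj; omega))
    rw [h0, add_zero]
  · have h0 : ∑ j ∈ Finset.Ico d L, g j = 0 :=
      Finset.sum_eq_zero (fun j hj => hg j (by simp only [Finset.mem_Ico] at hj; omega))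
    rw [Finset.Ico_eq_empty (by omega : ¬ d < (l:ℤ)+1), Finset.sum_empty, h0]

lemma sum_Ico_sub_one (g : ℤ → ℤ) (a b : ℤ) :
    ∑ j ∈ Finset.Ico a b, g (j - 1) = ∑ j ∈ Finset.Ico (a-1) (b-1), g j := by
  rw [show Finset.Ico a b = Finset.Ico (a-1+1) (b-1+1) by norm_num,
    ← Finset.map_add_right_Ico (a-1) (b-1) 1, Finset.sum_map]
  exact Finset.sum_congr rfl (fun j _ => by simp)

lemma sum_Ico_add_one (g : ℤ → ℤ) (a b : ℤ) :
    ∑ j ∈ Finset.Ico a b, g (j + 1) = ∑ j ∈ Finset.Ico (a+1) (b+1), g j := by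
  rw [← Finset.map_add_right_Ico a b 1, Finset.sum_map]
  exact Finset.sum_congr rfl (fun j _ => by simp)

lemma S1_succ (l : ℕ) (d : ℤ) : S1 (l+1) d = S1 l (d-1) + S1 l (d+1) := by
  unfold S1
  rw [show ((l+1:ℕ):ℤ)+1 = ((l:ℤ)+1)+1 by push_cast; ring]
  rw [Finset.sum_congr rfl (fun j _ => cI_succ l j), Finset.sum_add_distrib]
  congr 1
  · rw [sum_Ico_sub_one (cI l) d ((l:ℤ)+1+1), show (l:ℤ)+1+1-1 = (l:ℤ)+1 by ring]
  · rw [sum_Ico_add_one (cI l) d ((l:ℤ)+1+1)]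
    exact sum_Ico_stable (fun j hj => cI_eq_zero_of_gt l j hj) (by omega)

lemma T1_succ (l : ℕ) (d : ℤ) :
    T1 (l+1) d = T1 l (d-1) + S1 l (d-1) + (T1 l (d+1) - S1 l (d+1)) := by
  unfold T1 S1
  rw [show ((l+1:ℕ):ℤ)+1 = ((l:ℤ)+1)+1 by push_cast; ring]
  have hexp : ∑ j ∈ Finset.Ico d ((l:ℤ)+1+1), j * cI (l+1) j
      = ∑ j ∈ Finset.Ico d ((l:ℤ)+1+1), (j * cI l (j-1) + j * cI l (j+1)) :=
    Finset.sum_congr rfl (fun j _ => by rw [cI_succ l j, mul_add])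
  rw [hexp, Finset.sum_add_distrib]
  congr 1
  · have h1 : ∀ j : ℤ, j * cI l (j-1) = (fun x => (x+1) * cI l x) (j - 1) := by
      intro j; simp only; ring_nf
    rw [Finset.sum_congr rfl (fun j _ => h1 j), sum_Ico_sub_one (fun x => (x+1) * cI l x) d,
      show (l:ℤ)+1+1-1 = (l:ℤ)+1 by ring]
    have hx : ∑ j ∈ Finset.Ico (d-1) ((l:ℤ)+1), (j+1) * cI l j
        = ∑ j ∈ Finset.Ico (d-1) ((l:ℤ)+1), (j * cI l j + cI l j) :=
      Finset.sum_congr rfl (fun j _ => by ring)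
    rw [hx, Finset.sum_add_distrib]
  · have h1 : ∀ j : ℤ, j * cI l (j+1) = (fun x => (x-1) * cI l x) (j + 1) := by
      intro j; simp only; ring_nf
    rw [Finset.sum_congr rfl (fun j _ => h1 j), sum_Ico_add_one (fun x => (x-1) * cI l x) d,
      sum_Ico_stable (l := l) (fun j hj => by
        simp only [cI_eq_zero_of_gt l j hj, mul_zero]) (by omega)]
    have hx : ∑ j ∈ Finset.Ico (d+1) ((l:ℤ)+1), (j-1) * cI l j
        = ∑ j ∈ Finset.Ico (d+1) ((l:ℤ)+1), (j * cI l j - cI l j) :=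
      Finset.sum_congr rfl (fun j _ => by ring)
    rw [hx, Finset.sum_sub_distrib]

lemma S1_step (l : ℕ) (d : ℤ) : S1 l d = cI l d + S1 l (d+1) := by
  unfold S1
  rcases le_or_gt d (l:ℤ) with hd | hd
  · rw [sum_Ico_split (cI l) (show d ≤ d+1 by omega) (by omega),
      show Finset.Ico d (d+1) = {d} by ext j; simp only [Finset.mem_Ico, Finset.mem_singleton]; omega,
      Finset.sum_singleton]
  · rw [Finset.Ico_eq_empty (by omega : ¬ d < (l:ℤ)+1),
      Finset.Ico_eq_empty (by omega : ¬ d+1 < (l:ℤ)+1), cI_eq_zero_of_gt l d hd]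
    simp

lemma T1_step (l : ℕ) (d : ℤ) : T1 l d = d * cI l d + T1 l (d+1) := by
  unfold T1
  rcases le_or_gt d (l:ℤ) with hd | hd
  · rw [sum_Ico_split (fun j => j * cI l j) (show d ≤ d+1 by omega) (by omega),
      show Finset.Ico d (d+1) = {d} by ext j; simp only [Finset.mem_Ico, Finset.mem_singleton]; omega,
      Finset.sum_singleton]
  · rw [Finset.Ico_eq_empty (by omega : ¬ d < (l:ℤ)+1),
      Finset.Ico_eq_empty (by omega : ¬ d+1 < (l:ℤ)+1), cI_eq_zero_of_gt l d hd]
    simp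

lemma T1_rec (l : ℕ) : T1 (l+1) 1 = 2 * T1 l 1 + cI l 0 := by
  have h := T1_succ l 1
  norm_num at h
  rw [h]
  have f1 := T1_step l 0
  have f2 := T1_step l 1
  have e1 := S1_step l 0
  have e2 := S1_step l 1
  norm_num at f1 f2 e1 e2
  linear_combination f1 - f2 + e1 + e2

lemma T1_one_zero (l : ℕ) : T1 l 0 = T1 l 1 := by
  have := T1_step l 0; norm_num at this; exact this

lemma T1_eval : ∀ m : ℕ, T1 (2*m) 1 = m * cI (2*m) 0 ∧ T1 (2*m+1) 1 = (m+1) * cI (2*m+1) 1 := by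
  intro m
  induction m with
  | zero =>
    constructor
    · show T1 0 1 = _
      rw [show T1 0 1 = ∑ j ∈ Finset.Ico (1:ℤ) 1, j * cI 0 j from rfl]
      simp
    · show T1 1 1 = _
      rw [show (1:ℕ) = 0 + 1 from rfl, T1_rec 0,
        show T1 0 1 = ∑ j ∈ Finset.Ico (1:ℤ) 1, j * cI 0 j from rfl]
      simp [cI]
  | succ m ih =>
    obtain ⟨ihe, iho⟩ := ih
    have heven : T1 (2*(m+1)) 1 = (m+1) * cI (2*(m+1)) 0 := by
      rw [show 2*(m+1) = (2*m+1)+1 by ring, T1_rec, iho,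
        cI_eq_zero_of_odd (2*m+1) 0 (by push_cast; omega),
        cI_succ (2*m+1) 0, show (0:ℤ)-1 = -1 by ring, show (0:ℤ)+1 = 1 by ring,
        show (-1 : ℤ) = -(1:ℤ) by ring, cI_symm]
      ring
    refine ⟨heven, ?_⟩
    rw [show 2*(m+1)+1 = (2*(m+1))+1 by ring, T1_rec, heven]
    have hc0 : cI (2*(m+1)) 0 = ((2*(m+1)).choose (m+1) : ℤ) := by
      have := cI_choose (2*(m+1)) (m+1)
      rw [show 2*((m+1:ℕ):ℤ) - ((2*(m+1):ℕ):ℤ) = 0 by push_cast; ring] at this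
      exact this
    have hc2 : cI (2*(m+1)) 2 = ((2*(m+1)).choose (m+2) : ℤ) := by
      have := cI_choose (2*(m+1)) (m+2)
      rw [show 2*((m+2:ℕ):ℤ) - ((2*(m+1):ℕ):ℤ) = 2 by push_cast; ring] at this
      exact this
    have hkey : ((2*(m+1)).choose (m+2) : ℤ) * (m+2) = ((2*(m+1)).choose (m+1) : ℤ) * (m+1) := by
      have := Nat.choose_succ_right_eq (2*(m+1)) (m+1)
      have h2 : 2*(m+1) - (m+1) = m+1 := by omega
      rw [h2] at this
      exact_mod_cast congrArg (fun x : ℕ => (x : ℤ)) this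
    have hsplit : cI (2*(m+1)+1) 1 = cI (2*(m+1)) 0 + cI (2*(m+1)) 2 := by
      rw [cI_succ]; norm_num
    rw [hsplit, hc0, hc2]
    push_cast
    linear_combination -hkey

/-! ### total sum and symmetric splits -/

lemma sum_Ico_stable2 {g : ℤ → ℤ} {l : ℕ} (hg : ∀ j, (l:ℤ) < |j| → g j = 0)
    {a b : ℤ} (ha : a ≤ -(l:ℤ)) (hb : (l:ℤ) < b) :
    ∑ j ∈ Finset.Ico a b, g j = ∑ j ∈ Finset.Ico (-(l:ℤ)) ((l:ℤ)+1), g j := by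
  rw [sum_Ico_split g ha (by omega),
    Finset.sum_eq_zero (fun j hj => hg j (by simp only [Finset.mem_Ico] at hj; rw [abs_of_nonpos (by omega)]; omega)),
    zero_add]
  exact sum_Ico_stable (fun j hj => hg j (by rw [abs_of_pos (by omega)]; omega)) hb

lemma cI_total : ∀ l : ℕ, ∑ j ∈ Finset.Ico (-(l:ℤ)) ((l:ℤ)+1), cI l j = 2^l := by
  intro l
  induction l with
  | zero => simp [cI]
  | succ l ih =>
    have hz : ∀ j, (l:ℤ) < |j| → cI l j = 0 := by
      intro j hj
      rcases le_or_gt 0 j with h | h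
      · rw [abs_of_nonneg h] at hj; exact cI_eq_zero_of_gt l j hj
      · rw [abs_of_neg h] at hj; exact cI_eq_zero_of_lt l j (by omega)
    have key : ∀ a b : ℤ, a ≤ -(l:ℤ) → (l:ℤ) < b → ∑ j ∈ Finset.Ico a b, cI l j = 2^l := by
      intro a b ha hb; rw [sum_Ico_stable2 hz ha hb, ih]
    rw [show (-((l+1:ℕ):ℤ)) = -(l:ℤ)-1 by push_cast; ring,
      show ((l+1:ℕ):ℤ)+1 = ((l:ℤ)+1)+1 by push_cast; ring]
    rw [Finset.sum_congr rfl (fun j _ => cI_succ l j), Finset.sum_add_distrib,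
      sum_Ico_sub_one (cI l) _ _, sum_Ico_add_one (cI l) _ _,
      key (-(l:ℤ)-1-1) ((l:ℤ)+1+1-1) (by omega) (by omega),
      key (-(l:ℤ)-1+1) ((l:ℤ)+1+1+1) (by omega) (by omega)]
    ring

lemma sum_Ico_neg (g : ℤ → ℤ) (a b : ℤ) :
    ∑ j ∈ Finset.Ico a b, g j = ∑ j ∈ Finset.Ico (1-b) (1-a), g (-j) := by
  apply Finset.sum_nbij' (fun j => -j) (fun j => -j)
  · intro j hj; simp only [Finset.mem_Ico] at hj ⊢; omega
  · intro j hj; simp only [Finset.mem_Ico] at hj ⊢; omega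
  · intro j _; ring
  · intro j _; ring
  · intro j _; rw [neg_neg]

lemma two_S1_zero (l : ℕ) : 2 * S1 l 0 = 2^l + cI l 0 := by
  have htot := cI_total l
  rw [sum_Ico_split (cI l) (show -(l:ℤ) ≤ 0 by omega) (by omega)] at htot
  have hneg : ∑ j ∈ Finset.Ico (-(l:ℤ)) 0, cI l j = S1 l 1 := by
    rw [sum_Ico_neg (cI l) _ _, show (1:ℤ) - 0 = 1 by ring,
      show (1:ℤ) - (-(l:ℤ)) = (l:ℤ)+1 by ring]
    exact Finset.sum_congr rfl (fun j _ => cI_symm l j)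
  rw [hneg] at htot
  have htot' : S1 l 1 + S1 l 0 = 2^l := htot
  have hstep := S1_step l 0
  norm_num at hstep
  linear_combination htot' + hstep

/-! ### closed forms -/

lemma zI_closed : ∀ (l : ℕ) (d : ℤ), 0 ≤ d → (2 ∣ ((l:ℤ) + d)) →
    zI l d = 2 * S1 l d - cI l d := by
  intro l
  induction l with
  | zero =>
    intro d hd hpar
    rcases eq_or_lt_of_le hd with h | h
    · subst h
      show (if (0:ℤ) = 0 then (1:ℤ) else 0) = _
      rw [show S1 0 0 = ∑ j ∈ Finset.Ico (0:ℤ) 1, cI 0 j from rfl]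
      simp [cI]
    · have hS : S1 0 d = 0 := Finset.sum_eq_zero (fun j hj => by
        simp only [Finset.mem_Ico] at hj
        show (if j = 0 then (1:ℤ) else 0) = 0
        rw [if_neg (by omega)])
      have hc : cI 0 d = 0 := by
        show (if d = 0 then (1:ℤ) else 0) = 0
        rw [if_neg (by omega)]
      show (if d = 0 then (1:ℤ) else 0) = _
      rw [if_neg (by omega), hS, hc]
      ring
  | succ l ih =>
    intro d hd hpar
    rcases eq_or_lt_of_le hd with h | h
    · subst h
      rw [zI_succ, if_pos rfl, show (0:ℤ) - 1 = -(1:ℤ) by ring, zI_symm,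
        show (0:ℤ) + 1 = 1 by ring, ih 1 (by omega) (by push_cast at hpar ⊢; omega),
        S1_succ, cI_succ]
      have hs : S1 l (0-1) = cI l (-1) + (cI l 0 + S1 l 1) := by
        rw [show (0:ℤ)-1 = -1 by ring, S1_step l (-1), show (-1:ℤ)+1 = 0 by ring, S1_step l 0]
        norm_num
      have hodd : cI l 0 = 0 := cI_eq_zero_of_odd l 0 (by push_cast at hpar ⊢; omega)
      have hsym : cI l (-1) = cI l 1 := by rw [show (-1:ℤ) = -(1:ℤ) by ring, cI_symm]
      rw [show (0:ℤ)-1 = -1 by ring] at *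
      rw [hs, hodd, hsym]
      ring
    · rw [zI_succ, if_neg (by omega),
        ih (d-1) (by omega) (by push_cast at hpar ⊢; omega),
        ih (d+1) (by omega) (by push_cast at hpar ⊢; omega),
        S1_succ, cI_succ]
      ring

lemma tI_closed : ∀ (l : ℕ) (d : ℤ), 0 ≤ d → (2 ∣ ((l:ℤ) + d)) →
    2 * tI l d = (d-1) * T1 l d + ((l:ℤ) + d^2) * S1 l d + (d - d^2) * cI l d := by
  intro l
  induction l with
  | zero =>
    intro d hd hpar
    rcases eq_or_lt_of_le hd with h | h
    · subst h
      show 2 * (0:ℤ) = _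
      rw [show T1 0 0 = ∑ j ∈ Finset.Ico (0:ℤ) 1, j * cI 0 j from rfl,
        show S1 0 0 = ∑ j ∈ Finset.Ico (0:ℤ) 1, cI 0 j from rfl]
      simp [cI]
    · have hS : S1 0 d = 0 := Finset.sum_eq_zero (fun j hj => by
        simp only [Finset.mem_Ico] at hj
        show (if j = 0 then (1:ℤ) else 0) = 0
        rw [if_neg (by omega)])
      have hT : T1 0 d = 0 := Finset.sum_eq_zero (fun j hj => by
        simp only [Finset.mem_Ico] at hj
        show j * (if j = 0 then (1:ℤ) else 0) = 0
        rw [if_neg (by omega), mul_zero])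
      have hc : cI 0 d = 0 := by
        show (if d = 0 then (1:ℤ) else 0) = 0
        rw [if_neg (by omega)]
      show 2 * (0:ℤ) = _
      rw [hS, hT, hc]
      ring
  | succ l ih =>
    intro d hd hpar
    rcases eq_or_lt_of_le hd with h | h
    · -- d = 0
      subst h
      have hoddl : ¬ (2 ∣ ((l:ℤ) + 0)) := by push_cast at hpar ⊢; omega
      obtain ⟨r, hr⟩ : ∃ r : ℕ, l = 2*r+1 := by
        have : ¬ (2 ∣ l) := by
          intro ⟨x, hx⟩; apply hoddl; exact ⟨(x:ℤ), by push_cast; omega⟩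
        exact ⟨l/2, by omega⟩
      rw [tI_succ, show (0:ℤ) - 1 = -(1:ℤ) by ring, tI_symm, show (0:ℤ)+1 = 1 by ring,
        abs_zero]
      have ih1 := ih 1 (by omega) (by push_cast at hpar ⊢; omega)
      norm_num at ih1
      have hT := T1_succ l 0
      have hS := S1_succ l 0
      norm_num at hT hS
      have hs1 : S1 l (-1) = cI l (-1) + (cI l 0 + S1 l 1) := by
        rw [S1_step l (-1), show (-1:ℤ)+1 = 0 by ring, S1_step l 0]
        norm_num
      have ht1 : T1 l (-1) = (-1) * cI l (-1) + T1 l 1 := by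
        rw [T1_step l (-1), show (-1:ℤ)+1 = 0 by ring, T1_step l 0]
        norm_num
      have hodd0 : cI l 0 = 0 := cI_eq_zero_of_odd l 0 (by push_cast at hpar ⊢; omega)
      have hsym : cI l (-1) = cI l 1 := by rw [show (-1:ℤ) = -(1:ℤ) by ring, cI_symm]
      have hA : 2 * T1 l 1 = ((l:ℤ)+1) * cI l 1 := by
        subst hr
        have := (T1_eval r).2
        rw [this]
        push_cast
        ring
      have hcc : cI (l+1) 0 = cI l (-1) + cI l 1 := by
        rw [cI_succ]; norm_num
      rw [hT, hS, hs1, ht1, hodd0, hsym, hcc]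
      push_cast
      linear_combination 2 * ih1 + hA
    · -- d ≥ 1
      have habs : |d| = d := abs_of_pos h
      have ih1 := ih (d-1) (by omega) (by push_cast at hpar ⊢; omega)
      have ih2 := ih (d+1) (by omega) (by push_cast at hpar ⊢; omega)
      have hT := T1_succ l d
      have hS := S1_succ l d
      have f1 := T1_step l (d-1)
      have f2 := T1_step l d
      have e1 := S1_step l (d-1)
      have e2 := S1_step l d
      have hodd : cI l d = 0 := cI_eq_zero_of_odd l d (by push_cast at hpar ⊢; omega)
      rw [show d - 1 + 1 = d by ring] at f1 e1
      rw [hodd] at f2 e2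
      rw [tI_succ, habs, hT, hS, cI_succ]
      push_cast
      linear_combination ih1 + ih2 - (f1 + f2) + (1 - 3*d)*(e1 + e2)

/-! ### final evaluations -/

lemma zI_eval (m : ℕ) : zI (2*m) 0 = 4^m := by
  rw [zI_closed (2*m) 0 (by omega) (by push_cast; omega)]
  have h := two_S1_zero (2*m)
  have : (2:ℤ) * S1 (2*m) 0 - cI (2*m) 0 = 2^(2*m) := by omega
  rw [this, pow_mul]
  norm_num

lemma tI_eval (m : ℕ) : 2 * tI (2*m) 0 = m * 4^m := by
  have hc := tI_closed (2*m) 0 (by omega) (by push_cast; omega)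
  norm_num at hc
  rw [T1_one_zero, (T1_eval m).1] at hc
  have h2 := two_S1_zero (2*m)
  have h4 : (2:ℤ)^(2*m) = 4^m := by rw [pow_mul]; norm_num
  push_cast at hc
  linear_combination hc + (m:ℤ) * h2 + (m:ℤ) * h4



/-! ### words infrastructure -/

def ht (w : Word) : ℤ := (w.count true : ℤ) - (w.count false : ℤ)

lemma height_eq_ht (w : Word) (k : ℕ) : height w k = ht (w.take k) := rfl

def allW (l : ℕ) : Finset Word :=
  (Finset.univ : Finset (Fin l → Bool)).image List.ofFn

lemma mem_allW {l : ℕ} {w : Word} : w ∈ allW l ↔ w.length = l := by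
  constructor
  · intro hw
    obtain ⟨g, _, rfl⟩ := Finset.mem_image.mp hw
    simp
  · intro hw
    subst hw
    exact Finset.mem_image.mpr ⟨w.get, Finset.mem_univ _, List.ofFn_get w⟩

def WD (l : ℕ) (d : ℤ) : Finset Word := (allW l).filter (fun w => ht w = d)

lemma mem_WD {l : ℕ} {d : ℤ} {w : Word} : w ∈ WD l d ↔ w.length = l ∧ ht w = d := by
  unfold WD
  rw [Finset.mem_filter, mem_allW]

lemma ht_append (u v : Word) : ht (u ++ v) = ht u + ht v := by
  unfold ht
  rw [List.count_append, List.count_append]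
  push_cast
  ring

lemma ht_single (b : Bool) : ht [b] = if b then 1 else -1 := by
  cases b <;> simp [ht]

lemma sum_allW_succ {M : Type*} [AddCommMonoid M] (l : ℕ) (f : Word → M) :
    ∑ w ∈ allW (l+1), f w = ∑ w ∈ allW l, f (w ++ [true]) + ∑ w ∈ allW l, f (w ++ [false]) := by
  unfold allW
  rw [Finset.sum_image (fun x _ y _ h => List.ofFn_injective h),
    Finset.sum_image (fun x _ y _ h => List.ofFn_injective h),
    Finset.sum_image (fun x _ y _ h => List.ofFn_injective h)]
  rw [← Equiv.sum_comp (Fin.snocEquiv (fun _ => Bool)) (fun g => f (List.ofFn g))]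
  rw [Fintype.sum_prod_type, Fintype.sum_bool]
  have hsnoc : ∀ (b : Bool) (g : Fin l → Bool),
      List.ofFn (Fin.snocEquiv (fun _ => Bool) (b, g)) = List.ofFn g ++ [b] := by
    intro b g
    show List.ofFn (Fin.snoc g b) = _
    rw [List.ofFn_succ' (Fin.snoc g b)]
    simp [Fin.snoc_castSucc, Fin.snoc_last, List.concat_eq_append]
  have h1 : ∑ g : Fin l → Bool, f (List.ofFn ((Fin.snocEquiv fun _ => Bool) (true, g)))
      = ∑ g : Fin l → Bool, f (List.ofFn g ++ [true]) :=
    Finset.sum_congr rfl (fun g _ => by rw [hsnoc])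
  have h2 : ∑ g : Fin l → Bool, f (List.ofFn ((Fin.snocEquiv fun _ => Bool) (false, g)))
      = ∑ g : Fin l → Bool, f (List.ofFn g ++ [false]) :=
    Finset.sum_congr rfl (fun g _ => by rw [hsnoc])
  rw [h1, h2]

lemma sum_WD_succ (l : ℕ) (d : ℤ) (f : Word → ℤ) :
    ∑ w ∈ WD (l+1) d, f w
      = ∑ w ∈ WD l (d-1), f (w ++ [true]) + ∑ w ∈ WD l (d+1), f (w ++ [false]) := by
  unfold WD
  rw [Finset.sum_filter, Finset.sum_filter, Finset.sum_filter, sum_allW_succ l]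
  have htt : ht [true] = 1 := by simp [ht]
  have htf : ht [false] = -1 := by simp [ht]
  congr 1
  · apply Finset.sum_congr rfl
    intro w _
    rw [ht_append, htt]
    by_cases h : ht w = d - 1
    · rw [if_pos (by omega), if_pos h]
    · rw [if_neg (by omega), if_neg h]
  · apply Finset.sum_congr rfl
    intro w _
    rw [ht_append, htf]
    by_cases h : ht w = d + 1
    · rw [if_pos (by omega), if_pos h]
    · rw [if_neg (by omega), if_neg h]

lemma WD_zero (d : ℤ) : WD 0 d = if d = 0 then {([] : Word)} else ∅ := by
  ext w
  rw [mem_WD]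
  constructor
  · rintro ⟨hl, hd⟩
    rw [List.length_eq_zero_iff] at hl
    subst hl
    have : ht [] = 0 := rfl
    rw [this] at hd
    subst hd
    simp
  · intro hw
    by_cases h : d = 0
    · subst h; simp at hw; subst hw; exact ⟨rfl, rfl⟩
    · rw [if_neg h] at hw; simp at hw

/-! heights after appending a letter -/

lemma height_append_le (w : Word) (b : Bool) {k : ℕ} (hk : k ≤ w.length) :
    height (w ++ [b]) k = height w k := by
  rw [height_eq_ht, height_eq_ht, List.take_append_of_le_length hk]

lemma height_append_last (w : Word) (b : Bool) :
    height (w ++ [b]) (w.length + 1) = ht w + (if b then 1 else -1) := by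
  rw [height_eq_ht, List.take_of_length_le (by simp), ht_append, ht_single]


/-! ### the three word tables -/

def tW (l : ℕ) (d : ℤ) : ℤ := ∑ w ∈ WD l d, ∑ k ∈ Finset.range (l+1), |height w k|

def zW (l : ℕ) (d : ℤ) : ℤ :=
  ∑ w ∈ WD l d, ∑ k ∈ Finset.range (l+1), (if height w k = 0 then 1 else 0)

def cW (l : ℕ) (d : ℤ) : ℤ := ((WD l d).card : ℤ)


/-! ### word tables equal algebraic tables -/

lemma card_int (s : Finset Word) : ((s.card : ℤ)) = ∑ _w ∈ s, (1:ℤ) := by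
  rw [Finset.card_eq_sum_ones s]; push_cast; ring

lemma cW_eq : ∀ (l : ℕ) (d : ℤ), cW l d = cI l d := by
  intro l
  induction l with
  | zero =>
    intro d
    unfold cW
    rw [WD_zero]
    by_cases h : d = 0 <;> simp [h, cI]
  | succ l ih =>
    intro d
    have h1 : cW (l+1) d = cW l (d-1) + cW l (d+1) := by
      unfold cW
      rw [card_int, card_int, card_int]
      exact sum_WD_succ l d (fun _ => 1)
    rw [h1, ih, ih, cI_succ]

lemma inner_abs_concat (l : ℕ) (w : Word) (b : Bool) (hw : w.length = l) :
    ∑ k ∈ Finset.range (l+1+1), |height (w ++ [b]) k|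
      = (∑ k ∈ Finset.range (l+1), |height w k|) + |ht w + (if b then 1 else -1)| := by
  rw [Finset.sum_range_succ]
  congr 1
  · refine Finset.sum_congr rfl (fun k hk => ?_)
    have hk' : k < l + 1 := Finset.mem_range.mp hk
    rw [height_append_le w b (by omega)]
  · rw [← hw, height_append_last]

lemma inner_zero_concat (l : ℕ) (w : Word) (b : Bool) (hw : w.length = l) :
    ∑ k ∈ Finset.range (l+1+1), (if height (w ++ [b]) k = 0 then (1:ℤ) else 0)
      = (∑ k ∈ Finset.range (l+1), (if height w k = 0 then (1:ℤ) else 0))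
        + (if ht w + (if b then 1 else -1) = 0 then (1:ℤ) else 0) := by
  rw [Finset.sum_range_succ]
  congr 1
  · refine Finset.sum_congr rfl (fun k hk => ?_)
    have hk' : k < l + 1 := Finset.mem_range.mp hk
    rw [height_append_le w b (by omega)]
  · rw [← hw, height_append_last]

lemma sum_inner_abs (l : ℕ) (d' : ℤ) (b : Bool) :
    ∑ w ∈ WD l d', ∑ k ∈ Finset.range (l+1+1), |height (w ++ [b]) k|
      = tW l d' + |d' + (if b then 1 else -1)| * cW l d' := by
  have hstep : ∀ w ∈ WD l d', ∑ k ∈ Finset.range (l+1+1), |height (w ++ [b]) k|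
      = (∑ k ∈ Finset.range (l+1), |height w k|) + |d' + (if b then 1 else -1)| := by
    intro w hw
    obtain ⟨hlen, hd⟩ := mem_WD.mp hw
    rw [inner_abs_concat l w b hlen, hd]
  rw [Finset.sum_congr rfl hstep, Finset.sum_add_distrib, Finset.sum_const, nsmul_eq_mul,
    mul_comm (((WD l d').card : ℤ)) _]
  rfl

lemma sum_inner_zero (l : ℕ) (d' : ℤ) (b : Bool) :
    ∑ w ∈ WD l d', ∑ k ∈ Finset.range (l+1+1), (if height (w ++ [b]) k = 0 then (1:ℤ) else 0)
      = zW l d' + (if d' + (if b then 1 else -1) = 0 then (1:ℤ) else 0) * cW l d' := by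
  have hstep : ∀ w ∈ WD l d', ∑ k ∈ Finset.range (l+1+1), (if height (w ++ [b]) k = 0 then (1:ℤ) else 0)
      = (∑ k ∈ Finset.range (l+1), (if height w k = 0 then (1:ℤ) else 0))
        + (if d' + (if b then 1 else -1) = 0 then (1:ℤ) else 0) := by
    intro w hw
    obtain ⟨hlen, hd⟩ := mem_WD.mp hw
    rw [inner_zero_concat l w b hlen, hd]
  rw [Finset.sum_congr rfl hstep, Finset.sum_add_distrib, Finset.sum_const, nsmul_eq_mul,
    mul_comm (((WD l d').card : ℤ)) _]
  rfl

lemma tW_eq : ∀ (l : ℕ) (d : ℤ), tW l d = tI l d := by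
  intro l
  induction l with
  | zero =>
    intro d
    unfold tW
    rw [WD_zero]
    by_cases h : d = 0 <;> simp [h, tI, height]
  | succ l ih =>
    intro d
    have h1 : tW (l+1) d
        = (tW l (d-1) + |d - 1 + (if (true:Bool) then (1:ℤ) else -1)| * cW l (d-1))
          + (tW l (d+1) + |d + 1 + (if (false:Bool) then (1:ℤ) else -1)| * cW l (d+1)) := by
      show (∑ w ∈ WD (l+1) d, ∑ k ∈ Finset.range (l+1+1), |height w k|) = _
      rw [sum_WD_succ l d (fun w => ∑ k ∈ Finset.range (l+1+1), |height w k|),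
        sum_inner_abs l (d-1) true, sum_inner_abs l (d+1) false]
    rw [h1, ih, ih, cW_eq, cW_eq, tI_succ, cI_succ,
      show d - 1 + (if (true:Bool) then (1:ℤ) else -1) = d by norm_num,
      show d + 1 + (if (false:Bool) then (1:ℤ) else -1) = d by norm_num]
    ring

lemma zW_eq : ∀ (l : ℕ) (d : ℤ), zW l d = zI l d := by
  intro l
  induction l with
  | zero =>
    intro d
    unfold zW
    rw [WD_zero]
    by_cases h : d = 0 <;> simp [h, zI, height, ht]
  | succ l ih =>
    intro d
    have h1 : zW (l+1) d
        = (zW l (d-1) + (if d - 1 + (if (true:Bool) then (1:ℤ) else -1) = 0 then (1:ℤ) else 0) * cW l (d-1))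
          + (zW l (d+1) + (if d + 1 + (if (false:Bool) then (1:ℤ) else -1) = 0 then (1:ℤ) else 0) * cW l (d+1)) := by
      show (∑ w ∈ WD (l+1) d, ∑ k ∈ Finset.range (l+1+1), (if height w k = 0 then (1:ℤ) else 0)) = _
      rw [sum_WD_succ l d
          (fun w => ∑ k ∈ Finset.range (l+1+1), (if height w k = 0 then (1:ℤ) else 0)),
        sum_inner_zero l (d-1) true, sum_inner_zero l (d+1) false]
    rw [h1, ih, ih, cW_eq, cW_eq, zI_succ, cI_succ,
      show d - 1 + (if (true:Bool) then (1:ℤ) else -1) = d by norm_num,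
      show d + 1 + (if (false:Bool) then (1:ℤ) else -1) = d by norm_num]
    by_cases h : d = 0
    · subst h; norm_num; ring
    · rw [if_neg h, if_neg h]; ring


/-! ### complementation -/

lemma not_injective : Function.Injective not := by
  intro a b h; cases a <;> cases b <;> simp_all

lemma count_true_map_not (w : Word) : (w.map not).count true = w.count false := by
  have := List.count_map_of_injective w not not_injective false
  simpa using this

lemma count_false_map_not (w : Word) : (w.map not).count false = w.count true := by
  have := List.count_map_of_injective w not not_injective true
  simpa using this

lemma ht_map_not (w : Word) : ht (w.map not) = - ht w := by
  unfold ht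
  rw [count_true_map_not, count_false_map_not]
  ring

lemma height_map_not (w : Word) (k : ℕ) : height (w.map not) k = - height w k := by
  rw [height_eq_ht, height_eq_ht, ← List.map_take, ht_map_not]

lemma map_not_map_not (w : Word) : (w.map not).map not = w := by
  rw [List.map_map]
  have : (not ∘ not) = id := funext (fun b => Bool.not_not b)
  rw [this, List.map_id]

lemma sum_WD_mapNot (l : ℕ) (d : ℤ) (f : Word → ℤ) :
    ∑ w ∈ WD l d, f w = ∑ w ∈ WD l (-d), f (w.map not) := by
  apply Finset.sum_nbij' (i := fun w => w.map not) (j := fun w => w.map not)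
  · intro w hw
    obtain ⟨h1, h2⟩ := mem_WD.mp hw
    exact mem_WD.mpr ⟨by simpa using h1, by rw [ht_map_not, h2]⟩
  · intro w hw
    obtain ⟨h1, h2⟩ := mem_WD.mp hw
    exact mem_WD.mpr ⟨by simpa using h1, by rw [ht_map_not, h2]; ring⟩
  · intro w _; exact map_not_map_not w
  · intro w _; exact map_not_map_not w
  · intro w _; rw [map_not_map_not]

lemma sgn_add (x : ℤ) :
    (if 0 ≤ x then (1:ℤ) else -1) + (if 0 ≤ -x then (1:ℤ) else -1)
      = 2 * (if x = 0 then (1:ℤ) else 0) := by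
  rcases lt_trichotomy x 0 with h | h | h
  · rw [if_neg (by omega), if_pos (by omega), if_neg (by omega)]; ring
  · subst h; norm_num
  · rw [if_pos (by omega), if_neg (by omega), if_neg (by omega)]; ring

lemma sgn_sum (l : ℕ) :
    ∑ w ∈ WD l 0, ∑ k ∈ Finset.range (l+1), (if 0 ≤ height w k then (1:ℤ) else -1)
      = zW l 0 := by
  have h := sum_WD_mapNot l 0
    (fun w => ∑ k ∈ Finset.range (l+1), (if 0 ≤ height w k then (1:ℤ) else -1))
  rw [neg_zero] at h
  have h2 : ∀ w ∈ WD l 0,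
      ∑ k ∈ Finset.range (l+1), (if 0 ≤ height (w.map not) k then (1:ℤ) else -1)
        = ∑ k ∈ Finset.range (l+1), (if 0 ≤ -height w k then (1:ℤ) else -1) :=
    fun w _ => Finset.sum_congr rfl (fun k _ => by rw [height_map_not])
  rw [Finset.sum_congr rfl h2] at h
  have key : 2 * (∑ w ∈ WD l 0, ∑ k ∈ Finset.range (l+1), (if 0 ≤ height w k then (1:ℤ) else -1))
      = 2 * zW l 0 := by
    rw [two_mul]
    nth_rewrite 2 [h]
    calc (∑ w ∈ WD l 0, ∑ k ∈ Finset.range (l+1), (if 0 ≤ height w k then (1:ℤ) else -1))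
        + ∑ w ∈ WD l 0, ∑ k ∈ Finset.range (l+1), (if 0 ≤ -height w k then (1:ℤ) else -1)
        = ∑ w ∈ WD l 0, ∑ k ∈ Finset.range (l+1), 2 * (if height w k = 0 then (1:ℤ) else 0) := by
          rw [← Finset.sum_add_distrib]
          refine Finset.sum_congr rfl (fun w _ => ?_)
          rw [← Finset.sum_add_distrib]
          exact Finset.sum_congr rfl (fun k _ => sgn_add _)
      _ = 2 * zW l 0 := by
          unfold zW
          rw [Finset.mul_sum]
          exact Finset.sum_congr rfl (fun w _ => by rw [Finset.mul_sum])
  omega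

lemma abs_succ_int (x : ℤ) : |x + 1| = |x| + (if 0 ≤ x then (1:ℤ) else -1) := by
  rcases le_or_gt 0 x with h | h
  · rw [if_pos h, abs_of_nonneg h, abs_of_nonneg (by omega)]
  · rw [if_neg (by omega), abs_of_neg h, abs_of_nonpos (by omega)]; ring

lemma abs_one_sum (l : ℕ) :
    ∑ w ∈ WD l 0, ∑ k ∈ Finset.range (l+1), |height w k + 1| = tW l 0 + zW l 0 := by
  have h : ∀ w ∈ WD l 0, ∑ k ∈ Finset.range (l+1), |height w k + 1|
      = (∑ k ∈ Finset.range (l+1), |height w k|)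
        + ∑ k ∈ Finset.range (l+1), (if 0 ≤ height w k then (1:ℤ) else -1) := by
    intro w _
    rw [← Finset.sum_add_distrib]
    exact Finset.sum_congr rfl (fun k _ => abs_succ_int _)
  rw [Finset.sum_congr rfl h, Finset.sum_add_distrib, sgn_sum]
  rfl


/-! ### insertion bijection -/

def insTF (i : ℕ) (w : Word) : Word := w.take i ++ ([true, false] ++ w.drop i)
def delTF (i : ℕ) (w : Word) : Word := w.take i ++ w.drop (i+2)

lemma ht_cons (b : Bool) (t : Word) : ht (b :: t) = (if b then 1 else -1) + ht t := by
  have : (b :: t) = [b] ++ t := rfl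
  rw [this, ht_append, ht_single]

lemma ht_TF (B : Word) : ht (true :: false :: B) = ht B := by
  rw [ht_cons, ht_cons]
  norm_num

lemma take_len {i : ℕ} {w : Word} (h : i ≤ w.length) : (w.take i).length = i := by
  simp [List.length_take]; omega

lemma length_insTF {i : ℕ} {w : Word} (h : i ≤ w.length) :
    (insTF i w).length = w.length + 2 := by
  simp [insTF]; omega

lemma ht_insTF {i : ℕ} {w : Word} (h : i ≤ w.length) : ht (insTF i w) = ht w := by
  unfold insTF
  have hx : [true, false] ++ w.drop i = true :: false :: w.drop i := rfl
  rw [ht_append, hx, ht_TF, ← ht_append, List.take_append_drop]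

lemma getD_insTF_i {i : ℕ} {w : Word} (h : i ≤ w.length) :
    (insTF i w).getD i true = true := by
  unfold insTF
  rw [List.getD_append_right _ _ _ _ (by rw [take_len h]), take_len h, Nat.sub_self]
  rfl

lemma getD_insTF_i1 {i : ℕ} {w : Word} (h : i ≤ w.length) :
    (insTF i w).getD (i+1) true = false := by
  unfold insTF
  rw [List.getD_append_right _ _ _ _ (by rw [take_len h]; omega), take_len h,
    show i + 1 - i = 1 by omega]
  rfl

lemma height_insTF_le {i k : ℕ} {w : Word} (hi : i ≤ w.length) (hk : k ≤ i) :
    height (insTF i w) k = height w k := by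
  rw [height_eq_ht, height_eq_ht]
  unfold insTF
  rw [List.take_append_of_le_length (by rw [take_len hi]; omega), List.take_take,
    min_eq_left hk]

lemma height_insTF_mid {i : ℕ} {w : Word} (hi : i ≤ w.length) :
    height (insTF i w) (i+1) = height w i + 1 := by
  rw [height_eq_ht, height_eq_ht]
  unfold insTF
  rw [List.take_append, take_len hi,
    List.take_of_length_le (by rw [take_len hi]; omega),
    show i + 1 - i = 1 by omega]
  rw [ht_append]
  have : List.take 1 ([true, false] ++ w.drop i) = [true] := rfl
  rw [this, ht_single]
  norm_num

lemma height_insTF_high {i r : ℕ} {w : Word} (hi : i ≤ w.length) :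
    height (insTF i w) (i+2+r) = height w (i+r) := by
  rw [height_eq_ht, height_eq_ht]
  unfold insTF
  rw [List.take_append, take_len hi,
    List.take_of_length_le (by rw [take_len hi]; omega),
    show i + 2 + r - i = r + 2 by omega]
  have h2 : List.take (r+2) ([true, false] ++ w.drop i) = true :: false :: List.take r (w.drop i) := rfl
  rw [h2, ht_append, ht_TF]
  rw [List.take_add (l := w) (i := i) (j := r), ht_append]

lemma delTF_insTF {i : ℕ} {w : Word} (h : i ≤ w.length) : delTF i (insTF i w) = w := by
  unfold delTF insTF
  rw [List.take_append_of_le_length (by rw [take_len h]), List.take_take,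
    min_self, ← List.append_assoc,
    List.drop_left' (by rw [List.length_append, take_len h]; rfl)]
  exact List.take_append_drop i w

lemma insTF_delTF {i : ℕ} {w : Word} (hlen : i + 2 ≤ w.length)
    (h1 : w.getD i true = true) (h2 : w.getD (i+1) true = false) :
    insTF i (delTF i w) = w := by
  unfold insTF delTF
  rw [List.take_append_of_le_length (by rw [take_len (by omega)]),
    List.take_take, min_self,
    List.drop_left' (take_len (by omega : i ≤ w.length))]
  have hd : w.drop i = true :: false :: w.drop (i+2) := by
    rw [List.drop_eq_getElem_cons (by omega : i < w.length),
      List.drop_eq_getElem_cons (by omega : i + 1 < w.length)]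
    rw [List.getD_eq_getElem w true (by omega : i < w.length)] at h1
    rw [List.getD_eq_getElem w true (by omega : i + 1 < w.length)] at h2
    rw [h1, h2]
  have hx : [true, false] ++ w.drop (i+2) = true :: false :: w.drop (i+2) := rfl
  rw [hx, ← hd]
  exact List.take_append_drop i w

lemma delTF_mem {l i : ℕ} {w : Word} (hi : i ≤ l) (hw : w ∈ WD (l+2) 0)
    (h1 : w.getD i true = true) (h2 : w.getD (i+1) true = false) :
    delTF i w ∈ WD l 0 := by
  obtain ⟨hlen, hht⟩ := mem_WD.mp hw
  have hd : w.drop i = true :: false :: w.drop (i+2) := by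
    rw [List.drop_eq_getElem_cons (by omega : i < w.length),
      List.drop_eq_getElem_cons (by omega : i + 1 < w.length)]
    rw [List.getD_eq_getElem w true (by omega : i < w.length)] at h1
    rw [List.getD_eq_getElem w true (by omega : i + 1 < w.length)] at h2
    rw [h1, h2]
  refine mem_WD.mpr ⟨?_, ?_⟩
  · unfold delTF
    rw [List.length_append, take_len (by omega), List.length_drop]
    omega
  · unfold delTF
    rw [ht_append]
    have : ht w = ht (w.take i) + ht (w.drop i) := by rw [← ht_append, List.take_append_drop]
    rw [hd, ht_TF] at this
    omega

lemma insTF_mem {l i : ℕ} {w : Word} (hi : i ≤ l) (hw : w ∈ WD l 0) :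
    insTF i w ∈ WD (l+2) 0 := by
  obtain ⟨hlen, hht⟩ := mem_WD.mp hw
  exact mem_WD.mpr ⟨by rw [length_insTF (by omega), hlen],
    by rw [ht_insTF (by omega), hht]⟩

lemma ins_abs_sum (i j : ℕ) (w : Word) (hw : w.length = i + j) :
    ∑ k ∈ Finset.range (i + j + 3), |height (insTF i w) k|
      = (∑ k ∈ Finset.range (i + j + 1), |height w k|)
        + |height w i| + |height w i + 1| := by
  have hi : i ≤ w.length := by omega
  have e0 : i + j + 3 = (i+2) + (j+1) := by omega
  rw [e0, Finset.sum_range_add, Finset.sum_range_succ]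
  have eA : ∑ k ∈ Finset.range (i+1), |height (insTF i w) k|
      = ∑ k ∈ Finset.range (i+1), |height w k| := by
    refine Finset.sum_congr rfl (fun k hk => ?_)
    have := Finset.mem_range.mp hk
    rw [height_insTF_le hi (by omega)]
  have eM : |height (insTF i w) (i+1)| = |height w i + 1| := by
    rw [height_insTF_mid hi]
  have eH : ∑ r ∈ Finset.range (j+1), |height (insTF i w) (i+2+r)|
      = ∑ r ∈ Finset.range (j+1), |height w (i+r)| := by
    refine Finset.sum_congr rfl (fun r _ => ?_)
    rw [height_insTF_high hi]
  rw [eA, eM, eH]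
  have e1 := Finset.sum_range_add (fun k => |height w k|) i (j+1)
  have e2 := Finset.sum_range_succ (fun k => |height w k|) i
  have e3 : i + (j + 1) = i + j + 1 := by omega
  rw [e3] at e1
  beta_reduce at e1 e2
  linarith [e1, e2]

lemma sum_Btf (i j : ℕ) :
    ∑ w ∈ (WD (i+j+2) 0).filter
        (fun w => w.getD i true = true ∧ w.getD (i+1) true = false),
      ∑ k ∈ Finset.range (i+j+3), |height w k|
    = ∑ w ∈ WD (i+j) 0,
        ((∑ k ∈ Finset.range (i+j+1), |height w k|)
          + |height w i| + |height w i + 1|) := by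
  symm
  apply Finset.sum_nbij' (i := fun w => insTF i w) (j := fun w => delTF i w)
  · intro w hw
    rw [Finset.mem_filter]
    exact ⟨insTF_mem (by omega) hw,
      getD_insTF_i (by rw [(mem_WD.mp hw).1]; omega),
      getD_insTF_i1 (by rw [(mem_WD.mp hw).1]; omega)⟩
  · intro w hw
    rw [Finset.mem_filter] at hw
    exact delTF_mem (by omega) hw.1 hw.2.1 hw.2.2
  · intro w hw
    exact delTF_insTF (by rw [(mem_WD.mp hw).1]; omega)
  · intro w hw
    rw [Finset.mem_filter] at hw
    exact insTF_delTF (by rw [(mem_WD.mp hw.1).1]; omega) hw.2.1 hw.2.2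
  · intro w hw
    exact (ins_abs_sum i j w (mem_WD.mp hw).1).symm

lemma sum_Bft (i j : ℕ) :
    ∑ w ∈ (WD (i+j+2) 0).filter
        (fun w => w.getD i true = false ∧ w.getD (i+1) true = true),
      ∑ k ∈ Finset.range (i+j+3), |height w k|
    = ∑ w ∈ (WD (i+j+2) 0).filter
        (fun w => w.getD i true = true ∧ w.getD (i+1) true = false),
      ∑ k ∈ Finset.range (i+j+3), |height w k| := by
  apply Finset.sum_nbij' (i := fun w => w.map not) (j := fun w => w.map not)
  · intro w hw
    rw [Finset.mem_filter] at hw ⊢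
    obtain ⟨hm, hg1, hg2⟩ := hw
    obtain ⟨hlen, hht⟩ := mem_WD.mp hm
    have hmem : (w.map not) ∈ WD (i+j+2) 0 :=
      mem_WD.mpr ⟨by simpa using hlen, by rw [ht_map_not, hht]; ring⟩
    refine ⟨hmem, ?_, ?_⟩
    · rw [List.getD_eq_getElem _ true (by simp; omega), List.getElem_map,
        ← List.getD_eq_getElem w true (by omega), hg1]
      rfl
    · rw [List.getD_eq_getElem _ true (by simp; omega), List.getElem_map,
        ← List.getD_eq_getElem w true (by omega), hg2]
      rfl
  · intro w hw
    rw [Finset.mem_filter] at hw ⊢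
    obtain ⟨hm, hg1, hg2⟩ := hw
    obtain ⟨hlen, hht⟩ := mem_WD.mp hm
    have hmem : (w.map not) ∈ WD (i+j+2) 0 :=
      mem_WD.mpr ⟨by simpa using hlen, by rw [ht_map_not, hht]; ring⟩
    refine ⟨hmem, ?_, ?_⟩
    · rw [List.getD_eq_getElem _ true (by simp; omega), List.getElem_map,
        ← List.getD_eq_getElem w true (by omega), hg1]
      rfl
    · rw [List.getD_eq_getElem _ true (by simp; omega), List.getElem_map,
        ← List.getD_eq_getElem w true (by omega), hg2]
      rfl
  · intro w _; exact map_not_map_not w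
  · intro w _; exact map_not_map_not w
  · intro w _
    exact Finset.sum_congr rfl (fun k _ => by rw [height_map_not, abs_neg])


/-! ### flipCount as a sum -/

lemma flipCount_cons2 (a b : Bool) (t : Word) :
    flipCount (a :: b :: t) = flipCount (b :: t) + (if a ≠ b then 1 else 0) := by
  unfold flipCount
  show ((a, b) :: ((b :: t).zip t)).countP _ = _
  rw [List.countP_cons]
  cases a <;> cases b <;> simp

lemma flipCount_eq : ∀ (w : Word), (flipCount w : ℤ)
    = ∑ i ∈ Finset.range (w.length - 1),
        (if w.getD i true ≠ w.getD (i+1) true then (1:ℤ) else 0) := by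
  intro w
  induction w with
  | nil => simp [flipCount]
  | cons a t ih =>
    cases t with
    | nil => simp [flipCount]
    | cons b t' =>
      have ih' := ih
      rw [flipCount_cons2]
      have hlen : (a :: b :: t').length - 1 = ((b :: t').length - 1) + 1 := by
        simp
      rw [hlen, Finset.sum_range_succ'
        (fun i => if (a :: b :: t').getD i true ≠ (a :: b :: t').getD (i+1) true
          then (1:ℤ) else 0) ((b :: t').length - 1)]
      have hsh : ∀ i : ℕ, (a :: b :: t').getD (i+1) true = (b :: t').getD i true := by
        intro i; rfl
      have hsum : ∑ i ∈ Finset.range ((b :: t').length - 1),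
          (if (a :: b :: t').getD (i+1) true ≠ (a :: b :: t').getD (i+1+1) true
            then (1:ℤ) else 0)
          = ∑ i ∈ Finset.range ((b :: t').length - 1),
            (if (b :: t').getD i true ≠ (b :: t').getD (i+1) true then (1:ℤ) else 0) := by
        refine Finset.sum_congr rfl (fun i _ => ?_)
        rw [hsh i, hsh (i+1)]
      beta_reduce
      rw [hsum, ← ih']
      have h0 : (a :: b :: t').getD 0 true = a := rfl
      have h1 : (a :: b :: t').getD 1 true = b := rfl
      rw [h0, h1]
      push_cast
      by_cases hab : a = b <;> simp [hab]

/-! ### volume as a sum of |heights| -/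

lemma height_zero (w : Word) : height w 0 = 0 := by
  simp [height]

lemma height_top (w : Word) {k : ℕ} (h : w.length ≤ k) : height w k = ht w := by
  rw [height_eq_ht, List.take_of_length_le h]

lemma height_succ_step (w : Word) (k : ℕ) (hk : k < w.length) :
    height w (k+1) = height w k + (if w.getD k true then 1 else -1) := by
  rw [height_eq_ht, height_eq_ht, List.take_succ, List.getElem?_eq_getElem hk]
  show ht (w.take k ++ [w[k]]) = _
  rw [ht_append, ht_single, List.getD_eq_getElem w true hk]

lemma abs_consec (a e : ℤ) (he : e = 1 ∨ e = -1) : |a + (a + e)| = |a| + |a + e| := by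
  rw [Int.abs_eq_natAbs, Int.abs_eq_natAbs, Int.abs_eq_natAbs]
  omega

lemma volume_eq (w : Word) (hw : ht w = 0) :
    volume w = ((∑ k ∈ Finset.range (w.length + 1), |height w k| : ℤ) : ℝ) := by
  unfold volume
  have hpt : ∀ k ∈ Finset.range w.length,
      |((height w k + height w (k+1) : ℤ) : ℝ)|
        = (((|height w k| + |height w (k+1)|) : ℤ) : ℝ) := by
    intro k hk
    have hk' : k < w.length := Finset.mem_range.mp hk
    rw [← Int.cast_abs]
    congr 1
    rw [height_succ_step w k hk']
    exact abs_consec _ _ (by by_cases h : w.getD k true = true <;> simp [h])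
  rw [Finset.sum_congr rfl hpt, ← Int.cast_sum]
  have hint : ∑ k ∈ Finset.range w.length, (|height w k| + |height w (k+1)|)
      = 2 * ∑ k ∈ Finset.range (w.length + 1), |height w k| := by
    rw [Finset.sum_add_distrib]
    have e1 := Finset.sum_range_succ (fun k => |height w k|) w.length
    have e2 := Finset.sum_range_succ' (fun k => |height w k|) w.length
    beta_reduce at e1 e2
    rw [height_top w (le_refl _), hw] at e1
    rw [height_zero] at e2
    simp only [abs_zero] at e1 e2
    linarith [e1, e2]
  rw [hint]
  push_cast
  ring

/-! ### assembly -/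

lemma count_add_count (w : Word) : w.count true + w.count false = w.length := by
  induction w with
  | nil => rfl
  | cons a t ih => cases a <;> simp [List.count_cons] <;> omega

lemma configSet_eq (m : ℕ) : configSet (m+1) = WD (2*m+2) 0 := by
  unfold configSet WD allW
  rw [show 2*(m+1) = 2*m+2 by ring]
  apply Finset.filter_congr
  intro w hw
  have hlen : w.length = 2*m+2 := mem_allW.mp hw
  have hcc := count_add_count w
  unfold ht
  constructor
  · intro h; simp only [h]; push_cast; omega
  · intro h
    have : (w.count true : ℤ) = (w.count false : ℤ) := by omega
    have h2 : w.count true = w.count false := by exact_mod_cast this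
    omega

lemma main_int (m : ℕ) :
    ∑ w ∈ WD (2*m+2) 0, (flipCount w : ℤ) * (∑ k ∈ Finset.range (2*m+3), |height w k|)
      = (2*(m:ℤ)+3) * (2 * tI (2*m) 0) + 2 * zI (2*m) 0 := by
  have hstep : ∀ w ∈ WD (2*m+2) 0,
      (flipCount w : ℤ) * (∑ k ∈ Finset.range (2*m+3), |height w k|)
        = ∑ i ∈ Finset.range (2*m+1),
            (if w.getD i true ≠ w.getD (i+1) true then (1:ℤ) else 0)
              * (∑ k ∈ Finset.range (2*m+3), |height w k|) := by
    intro w hw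
    have hlen : w.length = 2*m+2 := (mem_WD.mp hw).1
    rw [flipCount_eq w, hlen, show 2*m+2-1 = 2*m+1 by omega, Finset.sum_mul]
  rw [Finset.sum_congr rfl hstep, Finset.sum_comm]
  have hper : ∀ i ∈ Finset.range (2*m+1),
      ∑ w ∈ WD (2*m+2) 0,
        (if w.getD i true ≠ w.getD (i+1) true then (1:ℤ) else 0)
          * (∑ k ∈ Finset.range (2*m+3), |height w k|)
      = 2 * ∑ w ∈ WD (2*m) 0,
          ((∑ k ∈ Finset.range (2*m+1), |height w k|)
            + |height w i| + |height w i + 1|) := by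
    intro i hi
    have hi' : i < 2*m+1 := Finset.mem_range.mp hi
    obtain ⟨j, hij⟩ : ∃ j, i + j = 2*m := ⟨2*m - i, by omega⟩
    have hite : ∀ w ∈ WD (2*m+2) 0,
        (if w.getD i true ≠ w.getD (i+1) true then (1:ℤ) else 0)
          * (∑ k ∈ Finset.range (2*m+3), |height w k|)
        = if w.getD i true ≠ w.getD (i+1) true
            then (∑ k ∈ Finset.range (2*m+3), |height w k|) else 0 := by
      intro w _
      by_cases h : w.getD i true ≠ w.getD (i+1) true <;> simp [h]
    rw [Finset.sum_congr rfl hite, ← Finset.sum_filter]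
    have hfsplit : (WD (2*m+2) 0).filter (fun w => w.getD i true ≠ w.getD (i+1) true)
        = ((WD (2*m+2) 0).filter (fun w => w.getD i true = true ∧ w.getD (i+1) true = false))
          ∪ ((WD (2*m+2) 0).filter (fun w => w.getD i true = false ∧ w.getD (i+1) true = true)) := by
      rw [← Finset.filter_or]
      apply Finset.filter_congr
      intro w _
      cases hh1 : w.getD i true <;> cases hh2 : w.getD (i+1) true <;> simp
    rw [hfsplit, Finset.sum_union]
    · have hB1 := sum_Btf i j
      have hB2 := sum_Bft i j
      rw [hij] at hB1 hB2
      rw [hB2, ← hB1]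
      ring
    · rw [Finset.disjoint_left]
      intro w hw1 hw2
      rw [Finset.mem_filter] at hw1 hw2
      rw [hw1.2.1] at hw2
      exact absurd hw2.2.1 (by simp)
  rw [Finset.sum_congr rfl hper]
  have e1 : ∑ i ∈ Finset.range (2*m+1), (2:ℤ) * ∑ w ∈ WD (2*m) 0,
      ((∑ k ∈ Finset.range (2*m+1), |height w k|) + |height w i| + |height w i + 1|)
      = 2 * ((2*(m:ℤ)+1) * tW (2*m) 0 + tW (2*m) 0 + (tW (2*m) 0 + zW (2*m) 0)) := by
    rw [← Finset.mul_sum]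
    congr 1
    have expand : ∀ i ∈ Finset.range (2*m+1), ∑ w ∈ WD (2*m) 0,
        ((∑ k ∈ Finset.range (2*m+1), |height w k|) + |height w i| + |height w i + 1|)
        = tW (2*m) 0 + (∑ w ∈ WD (2*m) 0, |height w i|)
          + (∑ w ∈ WD (2*m) 0, |height w i + 1|) := by
      intro i _
      rw [Finset.sum_add_distrib, Finset.sum_add_distrib]
      rfl
    rw [Finset.sum_congr rfl expand, Finset.sum_add_distrib, Finset.sum_add_distrib,
      Finset.sum_const, Finset.card_range, nsmul_eq_mul]
    have s1 : ∑ i ∈ Finset.range (2*m+1), ∑ w ∈ WD (2*m) 0, |height w i| = tW (2*m) 0 := by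
      rw [Finset.sum_comm]; rfl
    have s2 : ∑ i ∈ Finset.range (2*m+1), ∑ w ∈ WD (2*m) 0, |height w i + 1|
        = tW (2*m) 0 + zW (2*m) 0 := by
      rw [Finset.sum_comm]; exact abs_one_sum (2*m)
    rw [s1, s2]
    push_cast
    ring
  rw [e1, tW_eq, zW_eq]
  ring


/-- the flip-weighted total volume over all configurations of length
`2n` is `4^{n-1} (2n² - n + 1)`. -/
theorem flip_weighted_total_volume (n : ℕ) (hn : 1 ≤ n) :
    ∑ w ∈ configSet n, (flipCount w : ℝ) * volume w
      = 4 ^ (n - 1) * (2 * (n : ℝ) ^ 2 - (n : ℝ) + 1) := by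
  obtain ⟨m, rfl⟩ : ∃ m, n = m + 1 := ⟨n - 1, by omega⟩
  rw [configSet_eq m]
  have hcast : ∀ w ∈ WD (2*m+2) 0,
      (flipCount w : ℝ) * volume w
        = (((flipCount w : ℤ) * (∑ k ∈ Finset.range (2*m+3), |height w k|) : ℤ) : ℝ) := by
    intro w hw
    obtain ⟨hlen, hht⟩ := mem_WD.mp hw
    rw [volume_eq w hht, hlen, show 2*m+2+1 = 2*m+3 by omega]
    push_cast
    ring
  rw [Finset.sum_congr rfl hcast, ← Int.cast_sum, main_int m, tI_eval m, zI_eval m]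
  have hexp : m + 1 - 1 = m := by omega
  rw [hexp]
  push_cast
  ring

end Cooling
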